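/- The transformation π₂ of the P_III-type symmetric system, (x,y,z,w) ↦ (t/x, -(xy+α₀)x/t, s/z, -(zw+α₂)z/s), is symplectic (preserves dx∧dy + dz∧dw with t,s held fixed) and is an involution up to the parameter change (α₁,α₃) ↦ (α₁+α₃-1/2, 1-α₃): applying the variable transformation twice returns the identity on x,y,z,w. -/

import Mathlib

noncomputable def Dv (f : ℂ × ℂ × ℂ × ℂ → ℂ) (p v : ℂ × ℂ × ℂ × ℂ) : ℂ :=
  fderiv ℂ f p v

abbrev P4 := ℂ × ℂ × ℂ × ℂ

noncomputable def cx : P4 →L[ℂ] ℂ := ContinuousLinearMap.fst ℂ ℂ _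
noncomputable def cy : P4 →L[ℂ] ℂ := (ContinuousLinearMap.fst ℂ ℂ _).comp (ContinuousLinearMap.snd ℂ ℂ _)
noncomputable def cz : P4 →L[ℂ] ℂ :=
  ((ContinuousLinearMap.fst ℂ ℂ _).comp (ContinuousLinearMap.snd ℂ ℂ _)).comp
    (ContinuousLinearMap.snd ℂ ℂ _)
noncomputable def cw : P4 →L[ℂ] ℂ :=
  ((ContinuousLinearMap.snd ℂ ℂ _).comp (ContinuousLinearMap.snd ℂ ℂ _)).comp
    (ContinuousLinearMap.snd ℂ ℂ _)

section helpers
variable (p v : P4)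

lemma hx' : HasFDerivAt (fun q : P4 => q.1) cx p := cx.hasFDerivAt
lemma hy' : HasFDerivAt (fun q : P4 => q.2.1) cy p := cy.hasFDerivAt
lemma hz' : HasFDerivAt (fun q : P4 => q.2.2.1) cz p := cz.hasFDerivAt
lemma hw' : HasFDerivAt (fun q : P4 => q.2.2.2) cw p := cw.hasFDerivAt

lemma DvX (t : ℂ) (hx : p.1 ≠ 0) :
    Dv (fun q => t / q.1) p v = -t * v.1 / p.1 ^ 2 := by
  have h := (((hasFDerivAt_inv' (𝕜 := ℂ) hx).comp p (hx' p))).const_mul t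
  have e : (fun q : P4 => t / q.1) = fun q => t * (q.1)⁻¹ := by
    funext q; rw [div_eq_mul_inv]
  simp only [Function.comp] at h
  rw [Dv, e, h.fderiv]
  simp [cx]
  rw [sq]
  field_simp

lemma DvY (α₀ t : ℂ) :
    Dv (fun q => -(q.1 * q.2.1 + α₀) * q.1 / t) p v =
      (-(p.1 * v.2.1 + v.1 * p.2.1) * p.1 + -(p.1 * p.2.1 + α₀) * v.1) / t := by
  have h := ((((hx' p).mul (hy' p)).add_const α₀).neg.mul (hx' p)).mul_const t⁻¹
  have e : (fun q : P4 => -(q.1 * q.2.1 + α₀) * q.1 / t)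
      = fun q => -(q.1 * q.2.1 + α₀) * q.1 * t⁻¹ := by
    funext q; rw [div_eq_mul_inv]
  rw [Dv, e, HasFDerivAt.fderiv (f := fun q : P4 => -(q.1 * q.2.1 + α₀) * q.1 * t⁻¹) h]
  simp [cx, cy]
  field_simp
  ring

lemma DvZ (s : ℂ) (hz : p.2.2.1 ≠ 0) :
    Dv (fun q => s / q.2.2.1) p v = -s * v.2.2.1 / p.2.2.1 ^ 2 := by
  have h := (((hasFDerivAt_inv' (𝕜 := ℂ) hz).comp p (hz' p))).const_mul s
  have e : (fun q : P4 => s / q.2.2.1) = fun q => s * (q.2.2.1)⁻¹ := by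
    funext q; rw [div_eq_mul_inv]
  simp only [Function.comp] at h
  rw [Dv, e, h.fderiv]
  simp [cz]
  rw [sq]
  field_simp

lemma DvW (α₂ s : ℂ) :
    Dv (fun q => -(q.2.2.1 * q.2.2.2 + α₂) * q.2.2.1 / s) p v =
      (-(p.2.2.1 * v.2.2.2 + v.2.2.1 * p.2.2.2) * p.2.2.1 +
        -(p.2.2.1 * p.2.2.2 + α₂) * v.2.2.1) / s := by
  have h := ((((hz' p).mul (hw' p)).add_const α₂).neg.mul (hz' p)).mul_const s⁻¹
  have e : (fun q : P4 => -(q.2.2.1 * q.2.2.2 + α₂) * q.2.2.1 / s)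
      = fun q => -(q.2.2.1 * q.2.2.2 + α₂) * q.2.2.1 * s⁻¹ := by
    funext q; rw [div_eq_mul_inv]
  rw [Dv, e, HasFDerivAt.fderiv (f := fun q : P4 => -(q.2.2.1 * q.2.2.2 + α₂) * q.2.2.1 * s⁻¹) h]
  simp [cz, cw]
  field_simp
  ring
end helpers

def omega (u v : ℂ × ℂ × ℂ × ℂ) : ℂ :=
  (u.1 * v.2.1 - v.1 * u.2.1) + (u.2.2.1 * v.2.2.2 - v.2.2.1 * u.2.2.2)

noncomputable def pullback (X Y Z W : ℂ × ℂ × ℂ × ℂ → ℂ) (p u v : ℂ × ℂ × ℂ × ℂ) : ℂ :=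
  (Dv X p u * Dv Y p v - Dv X p v * Dv Y p u)
    + (Dv Z p u * Dv W p v - Dv Z p v * Dv W p u)

/-- The transformation π₂ of the P_III-type system in the phase variables. -/
noncomputable def pi2 (α₀ α₂ t s : ℂ) (p : ℂ × ℂ × ℂ × ℂ) : ℂ × ℂ × ℂ × ℂ :=
  (t / p.1, -(p.1 * p.2.1 + α₀) * p.1 / t,
   s / p.2.2.1, -(p.2.2.1 * p.2.2.2 + α₂) * p.2.2.1 / s)

/-- π₂ is symplectic and an involution on the phase variables (with the parameter
change (α₁,α₃) ↦ (α₁+α₃-1/2, 1-α₃) on the remaining parameters). -/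
theorem pi2_symplectic_and_involutive (α₀ α₁ α₂ α₃ t s : ℂ)
    (ht : t ≠ 0) (hs : s ≠ 0) (p : ℂ × ℂ × ℂ × ℂ)
    (hx : p.1 ≠ 0) (hz : p.2.2.1 ≠ 0) :
    (∀ u v : ℂ × ℂ × ℂ × ℂ,
      pullback (fun q => t / q.1)
        (fun q => -(q.1 * q.2.1 + α₀) * q.1 / t)
        (fun q => s / q.2.2.1)
        (fun q => -(q.2.2.1 * q.2.2.2 + α₂) * q.2.2.1 / s) p u v = omega u v) ∧
    pi2 α₀ α₂ t s (pi2 α₀ α₂ t s p) = p := by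
  constructor
  · intro u v
    rw [pullback, DvX p u t hx, DvX p v t hx, DvY p u α₀ t, DvY p v α₀ t,
      DvZ p u s hz, DvZ p v s hz, DvW p u α₂ s, DvW p v α₂ s, omega]
    obtain ⟨x, y, z, w⟩ := p
    obtain ⟨u1, u2, u3, u4⟩ := u
    obtain ⟨v1, v2, v3, v4⟩ := v
    simp only at hx hz ⊢
    field_simp
    have hK : t⁻¹ ^ 2 * x⁻¹ ^ 4 * z⁻¹ ^ 4 * s⁻¹ ^ 2 * (t ^ 2 * x ^ 4 * z ^ 4 * s ^ 2) = 1 := by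
      field_simp
    linear_combination
  · obtain ⟨x, y, z, w⟩ := p
    simp only at hx hz
    simp only [pi2, Prod.mk.injEq]
    refine ⟨?_, ?_, ?_, ?_⟩ <;> field_simp <;> ring
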